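/- arXiv:2105.13134 — 2 statements merged into one kernel-verified Lean document; each statement's English description precedes it below -/
import Mathlib

section
/- The full excitation graph is transitive: if (γ₀, γ₁) ∈ E^full and (γ₁, γ₂) ∈ E^full, then (γ₀, γ₂) ∈ E^full. -/
open Finset

namespace CC

variable {Λ : Type*} [DecidableEq Λ]

/-- The occupied part of `α` with respect to the reference state `ref`. -/
def occ (ref α : Finset Λ) : Finset Λ := α ∩ ref

/-- The virtual part of `α` with respect to the reference state `ref`. -/
def virt (ref α : Finset Λ) : Finset Λ := α \ ref

/-- The join operation `α ∨ β = (occ α ∩ occ β) ∪ (virt α ∪ virt β)`. -/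
def exJoin (ref α β : Finset Λ) : Finset Λ :=
  (occ ref α ∩ occ ref β) ∪ (virt ref α ∪ virt ref β)

/-- The meet operation `α ∧ β = (occ α ∪ occ β) ∪ (virt α ∩ virt β)`. -/
def exMeet (ref α β : Finset Λ) : Finset Λ :=
  (occ ref α ∪ occ ref β) ∪ (virt ref α ∩ virt ref β)

/-- The rank `rk α = |virt α|`. -/
def rk (ref α : Finset Λ) : ℕ := (virt ref α).card

/-- The set `𝓛` of compatible pairs of states: both have `N` elements,
`|occ α ∪ occ β| = N` and `virt α ∩ virt β = ∅`. -/
def memL (ref : Finset Λ) (N : ℕ) (α β : Finset Λ) : Prop :=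
  α.card = N ∧ β.card = N ∧ (occ ref α ∪ occ ref β).card = N ∧
    virt ref α ∩ virt ref β = ∅

/-- The edge relation of the full excitation graph:
`(β, γ) ∈ E^full` iff `γ = α ∨ β` for some `α` with `(α, β) ∈ 𝓛` and `α ≠ ref`. -/
def EFull (ref : Finset Λ) (N : ℕ) (β γ : Finset Λ) : Prop :=
  ∃ α : Finset Λ, memL ref N α β ∧ α ≠ ref ∧ γ = exJoin ref α β

lemma occ_union_virt (ref s : Finset Λ) : occ ref s ∪ virt ref s = s := by
  ext x; simp [occ, virt]; tauto

lemma occ_card_add_virt_card (ref s : Finset Λ) :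
    (occ ref s).card + (virt ref s).card = s.card := by
  simp only [occ, virt]; exact Finset.card_inter_add_card_sdiff s ref

lemma occ_exJoin (ref a b : Finset Λ) :
    occ ref (exJoin ref a b) = occ ref a ∩ occ ref b := by
  ext x; simp [occ, virt, exJoin]; tauto

lemma virt_exJoin (ref a b : Finset Λ) :
    virt ref (exJoin ref a b) = virt ref a ∪ virt ref b := by
  ext x; simp [occ, virt, exJoin]; tauto

/-- The full excitation graph is transitive: if `(γ₀, γ₁) ∈ E^full` and
`(γ₁, γ₂) ∈ E^full`, then `(γ₀, γ₂) ∈ E^full`. -/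
theorem eFull_transitive (ref : Finset Λ) (N : ℕ) (γ₀ γ₁ γ₂ : Finset Λ)
    (h₁ : EFull ref N γ₀ γ₁) (h₂ : EFull ref N γ₁ γ₂) :
    EFull ref N γ₀ γ₂ := by
  obtain ⟨a, ⟨haN, hg0N, hu1, hd1⟩, haref, hg1⟩ := h₁
  obtain ⟨b, ⟨hbN, hg1N, hu2, hd2⟩, hbref, hg2⟩ := h₂
  -- basic structure of γ₁ and γ₂
  have ho1 : occ ref γ₁ = occ ref a ∩ occ ref γ₀ := by rw [hg1, occ_exJoin]
  have hv1 : virt ref γ₁ = virt ref a ∪ virt ref γ₀ := by rw [hg1, virt_exJoin]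
  have ho2 : occ ref γ₂ = occ ref b ∩ occ ref γ₁ := by rw [hg2, occ_exJoin]
  have hv2 : virt ref γ₂ = virt ref b ∪ virt ref γ₁ := by rw [hg2, virt_exJoin]
  by_cases hb0 : virt ref b = ∅
  · -- degenerate case: γ₂ = γ₁
    have hbsub : occ ref γ₁ ⊆ occ ref b := by
      have hcb : (occ ref b).card = N := by
        have := occ_card_add_virt_card ref b; rw [hb0] at this; simp at this; omega
      have h1 : occ ref b ⊆ occ ref b ∪ occ ref γ₁ := Finset.subset_union_left
      have h2 : occ ref b ∪ occ ref γ₁ = occ ref b := by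
        apply (Finset.eq_of_subset_of_card_le h1 (by omega)).symm
      intro x hx
      have : x ∈ occ ref b ∪ occ ref γ₁ := Finset.mem_union_right _ hx
      rwa [h2] at this
    have hg21 : γ₂ = γ₁ := by
      have : occ ref γ₂ = occ ref γ₁ := by
        rw [ho2]; exact Finset.inter_eq_right.mpr hbsub
      have hvv : virt ref γ₂ = virt ref γ₁ := by rw [hv2, hb0]; simp
      rw [← occ_union_virt ref γ₂, ← occ_union_virt ref γ₁, this, hvv]
    exact ⟨a, ⟨haN, hg0N, hu1, hd1⟩, haref, by rw [hg21, hg1]⟩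
  · -- main case
    set A : Finset Λ := occ ref γ₂ ∪ (occ ref a \ occ ref γ₀) with hA
    set V : Finset Λ := virt ref b ∪ virt ref a with hV
    -- element-level facts
    have hAsub : A ⊆ ref := by
      intro x hx
      rw [hA] at hx
      simp only [occ, Finset.mem_union, Finset.mem_inter, Finset.mem_sdiff] at hx
      tauto
    have hVref : ∀ x ∈ V, x ∉ ref := by
      intro x hx
      rw [hV] at hx
      simp only [virt, Finset.mem_union, Finset.mem_sdiff] at hx
      tauto
    have hoA : occ ref (A ∪ V) = A := by
      rw [occ]
      ext x
      simp only [Finset.mem_inter, Finset.mem_union]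
      constructor
      · rintro ⟨hx | hx, hr⟩
        · exact hx
        · exact absurd hr (hVref x hx)
      · intro hx; exact ⟨Or.inl hx, hAsub hx⟩
    have hvA : virt ref (A ∪ V) = V := by
      rw [virt]
      ext x
      simp only [Finset.mem_sdiff, Finset.mem_union]
      constructor
      · rintro ⟨hx | hx, hr⟩
        · exact absurd (hAsub hx) hr
        · exact hx
      · intro hx; exact ⟨Or.inr hx, hVref x hx⟩
    -- γ₂'s occupied part sits inside γ₀'s
    have ho2' : occ ref γ₂ = occ ref b ∩ (occ ref a ∩ occ ref γ₀) := by rw [ho2, ho1]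
    have hAg0 : A ∩ occ ref γ₀ = occ ref γ₂ := by
      rw [hA, ho2']; ext x
      simp only [Finset.mem_inter, Finset.mem_union, Finset.mem_sdiff]
      tauto
    -- disjointness facts
    have hd1' : ∀ x, ¬(x ∈ virt ref a ∧ x ∈ virt ref γ₀) := by
      intro x hx
      have : x ∈ virt ref a ∩ virt ref γ₀ := Finset.mem_inter.mpr hx
      rw [hd1] at this; exact absurd this (Finset.notMem_empty x)
    have hd2' : ∀ x, ¬(x ∈ virt ref b ∧ x ∈ virt ref γ₁) := by
      intro x hx
      have : x ∈ virt ref b ∩ virt ref γ₁ := Finset.mem_inter.mpr hx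
      rw [hd2] at this; exact absurd this (Finset.notMem_empty x)
    have hd2a : ∀ x, ¬(x ∈ virt ref b ∧ x ∈ virt ref a) := by
      intro x ⟨h1, h2⟩
      exact hd2' x ⟨h1, by rw [hv1]; exact Finset.mem_union_left _ h2⟩
    have hd2g0 : ∀ x, ¬(x ∈ virt ref b ∧ x ∈ virt ref γ₀) := by
      intro x ⟨h1, h2⟩
      exact hd2' x ⟨h1, by rw [hv1]; exact Finset.mem_union_right _ h2⟩
    -- cardinality bookkeeping
    have ea : (occ ref a).card + (virt ref a).card = N := by
      rw [occ_card_add_virt_card, haN]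
    have eb : (occ ref b).card + (virt ref b).card = N := by
      rw [occ_card_add_virt_card, hbN]
    have eg0 : (occ ref γ₀).card + (virt ref γ₀).card = N := by
      rw [occ_card_add_virt_card, hg0N]
    have eg1 : (occ ref γ₁).card + (virt ref γ₁).card = N := by
      rw [occ_card_add_virt_card, hg1N]
    have ho1c : (occ ref γ₁).card + N = (occ ref a).card + (occ ref γ₀).card := by
      have := Finset.card_union_add_card_inter (occ ref a) (occ ref γ₀)
      rw [hu1, ← ho1] at this; omega
    have hv1c : (virt ref γ₁).card = (virt ref a).card + (virt ref γ₀).card := by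
      rw [hv1]
      apply Finset.card_union_of_disjoint
      rw [Finset.disjoint_left]; intro x hx hx'; exact hd1' x ⟨hx, hx'⟩
    have ho2c : (occ ref γ₂).card + N = (occ ref b).card + (occ ref γ₁).card := by
      have := Finset.card_union_add_card_inter (occ ref b) (occ ref γ₁)
      rw [hu2, ← ho2] at this; omega
    have hv2c : (virt ref γ₂).card = (virt ref b).card + (virt ref γ₁).card := by
      rw [hv2]
      apply Finset.card_union_of_disjoint
      rw [Finset.disjoint_left]; intro x hx hx'; exact hd2' x ⟨hx, hx'⟩
    have hsd : (occ ref a \ occ ref γ₀).card + (occ ref γ₀).card = N := by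
      rw [Finset.card_sdiff_add_card, hu1]
    have hAc : A.card = (occ ref γ₂).card + (occ ref a \ occ ref γ₀).card := by
      rw [hA]
      apply Finset.card_union_of_disjoint
      rw [Finset.disjoint_left]
      intro x hx hx'
      rw [ho2'] at hx
      simp only [Finset.mem_inter, Finset.mem_sdiff] at hx hx'
      tauto
    have hVc : V.card = (virt ref b).card + (virt ref a).card := by
      rw [hV]
      apply Finset.card_union_of_disjoint
      rw [Finset.disjoint_left]; intro x hx hx'; exact hd2a x ⟨hx, hx'⟩
    have hAVc : (A ∪ V).card = A.card + V.card := by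
      apply Finset.card_union_of_disjoint
      rw [Finset.disjoint_left]
      intro x hx hx'
      exact (hVref x hx') (hAsub hx)
    have hAunion : (A ∪ occ ref γ₀).card + (occ ref γ₂).card = A.card + (occ ref γ₀).card := by
      have := Finset.card_union_add_card_inter A (occ ref γ₀)
      rw [hAg0] at this; omega
    refine ⟨A ∪ V, ⟨?_, hg0N, ?_, ?_⟩, ?_, ?_⟩
    · -- card = N
      rw [hAVc]; omega
    · -- union of occupied parts has card N
      rw [hoA]; omega
    · -- disjoint virtual parts
      rw [hvA]
      ext x
      simp only [Finset.mem_inter, Finset.notMem_empty, iff_false]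
      rw [hV]
      simp only [Finset.mem_union]
      rintro ⟨hx | hx, hx'⟩
      · exact hd2g0 x ⟨hx, hx'⟩
      · exact hd1' x ⟨hx, hx'⟩
    · -- A ∪ V ≠ ref
      intro hcon
      obtain ⟨x, hx⟩ := Finset.nonempty_iff_ne_empty.mpr hb0
      have hxV : x ∈ V := by rw [hV]; exact Finset.mem_union_left _ hx
      have : x ∈ ref := by rw [← hcon]; exact Finset.mem_union_right _ hxV
      exact hVref x hxV this
    · -- γ₂ = exJoin ref (A ∪ V) γ₀
      rw [exJoin, hoA, hvA, hAg0]
      have : V ∪ virt ref γ₀ = virt ref γ₂ := by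
        rw [hV, hv2, hv1, Finset.union_assoc]
      rw [this, occ_union_virt]

end CC
end

section
/- Let Λ be finite with |Λ| = K and 2N ≤ K, and let γ ∈ S have rank r = rk(γ) ≥ 1. Then for every 1 ≤ n ≤ r, the number of directed paths of length n from the reference 0 to γ in the full excitation graph — i.e. the number of sequences (γ₀, γ₁, …, γ_n) with γ₀ = 0, γ_n = γ and (γ_{i}, γ_{i+1}) ∈ E^full for 0 ≤ i < n — equals p(r, n) = Σ over all (r₁, …, r_n) with r₁ + … + r_n = r and each r_i ≥ 1 of (r! / (r₁!⋯r_n!))². In particular this count depends only on r and n, not on γ, N or K. -/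
open Finset

namespace CC

variable {Λ : Type*} [DecidableEq Λ]

open scoped Classical in
/-- The number of directed paths `(γ₀, γ₁, …, γ_n)` of length `n` from the reference `ref`
to `γ` in the full excitation graph. -/
noncomputable def pathCount [Fintype Λ] (ref : Finset Λ) (N n : ℕ) (γ : Finset Λ) : ℕ :=
  ((Finset.univ : Finset (Fin (n + 1) → Finset Λ)).filter fun p =>
    p 0 = ref ∧ p (Fin.last n) = γ ∧
      ∀ i : Fin n, EFull ref N (p i.castSucc) (p i.succ)).card

lemma fin_telescope : ∀ {n : ℕ} (g : Fin (n+1) → ℕ) (c : Fin n → ℕ),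
    (∀ i : Fin n, g i.succ = g i.castSucc + c i) → g (Fin.last n) = g 0 + ∑ i, c i := by
  intro n
  induction n with
  | zero => intro g c _; simp [Fin.last]
  | succ n ih =>
    intro g c h
    have h1 : g (Fin.last (n+1)) = g ((Fin.last n).castSucc) + c (Fin.last n) := by
      rw [← Fin.succ_last]; exact h (Fin.last n)
    have h2 := ih (fun i => g i.castSucc) (fun i => c i.castSucc) (fun i => by
      show g i.succ.castSucc = g i.castSucc.castSucc + c i.castSucc
      rw [← Fin.succ_castSucc]; exact h i.castSucc)
    rw [h1, h2, Fin.sum_univ_castSucc]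
    simp
    ring

lemma chain_subset_last {Λ : Type*} {n : ℕ} (A : Fin (n+1) → Finset Λ)
    (h : ∀ i : Fin n, A i.castSucc ⊆ A i.succ) (i : Fin (n+1)) : A i ⊆ A (Fin.last n) := by
  induction i using Fin.reverseInduction with
  | last => exact subset_rfl
  | cast i ih => exact (h i).trans ih

lemma fin_card_eq {n : ℕ} (g h : Fin (n+1) → ℕ) (c : Fin n → ℕ)
    (hg : ∀ i : Fin n, g i.succ = g i.castSucc + c i)
    (hh : ∀ i : Fin n, h i.succ = h i.castSucc + c i)
    (h0 : g 0 = h 0) (i : Fin (n+1)) : g i = h i := by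
  induction i using Fin.induction with
  | zero => exact h0
  | succ i ih => rw [hg i, hh i, ih]

lemma multinomial_image {α β : Type*} [DecidableEq β] (s : Finset α) (e : α → β)
    (he : ∀ x ∈ s, ∀ y ∈ s, e x = e y → x = y) (f : β → ℕ) :
    Nat.multinomial (s.image e) f = Nat.multinomial s (fun x => f (e x)) := by
  unfold Nat.multinomial
  rw [Finset.sum_image he, Finset.prod_image he]

lemma univ_fin_succ (n : ℕ) :
    (Finset.univ : Finset (Fin (n+1))) =
      insert (Fin.last n) ((Finset.univ : Finset (Fin n)).image Fin.castSucc) := by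
  ext i
  simp only [mem_univ, mem_insert, mem_image, true_iff]
  rcases Fin.eq_castSucc_or_eq_last i with ⟨j, rfl⟩ | rfl
  · exact Or.inr ⟨j, trivial, rfl⟩
  · exact Or.inl rfl

lemma multinomial_fin_succ {n : ℕ} (c : Fin (n+1) → ℕ) :
    Nat.multinomial Finset.univ c =
      (c (Fin.last n) + ∑ i : Fin n, c i.castSucc).choose (c (Fin.last n)) *
        Nat.multinomial Finset.univ (fun i : Fin n => c i.castSucc) := by
  have hinj : ∀ x ∈ (univ : Finset (Fin n)), ∀ y ∈ univ,
      Fin.castSucc x = Fin.castSucc y → x = y := fun x _ y _ hxy => Fin.castSucc_injective n hxy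
  have hnm : Fin.last n ∉ (univ : Finset (Fin n)).image Fin.castSucc := by
    simp only [mem_image, not_exists]
    intro j
    intro h
    exact absurd h.2 (Fin.castSucc_lt_last j).ne
  rw [univ_fin_succ, Nat.multinomial_insert hnm, multinomial_image _ _ hinj,
    Finset.sum_image hinj]


open scoped Classical in
noncomputable def chainFinset [Fintype Λ] (n : ℕ) (T : Finset Λ) (c : Fin n → ℕ) :
    Finset (Fin (n+1) → Finset Λ) :=
  Finset.univ.filter fun A => A 0 = ∅ ∧ A (Fin.last n) = T ∧
    ∀ i : Fin n, A i.castSucc ⊆ A i.succ ∧ (A i.succ \ A i.castSucc).card = c i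

lemma mem_chainFinset [Fintype Λ] {n : ℕ} {T : Finset Λ} {c : Fin n → ℕ}
    {A : Fin (n+1) → Finset Λ} :
    A ∈ chainFinset n T c ↔ A 0 = ∅ ∧ A (Fin.last n) = T ∧
      ∀ i : Fin n, A i.castSucc ⊆ A i.succ ∧ (A i.succ \ A i.castSucc).card = c i := by
  simp [chainFinset]

lemma chainFinset_card [Fintype Λ] : ∀ (n : ℕ) (T : Finset Λ) (c : Fin n → ℕ),
    (∑ i, c i) = T.card → (chainFinset n T c).card = Nat.multinomial Finset.univ c := by
  intro n
  induction n with
  | zero =>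
    intro T c hsum
    have hT : T = ∅ := by
      rw [← Finset.card_eq_zero, ← hsum]; simp
    have : chainFinset 0 T c = {fun _ => ∅} := by
      ext A
      simp only [mem_chainFinset, mem_singleton]
      constructor
      · rintro ⟨h0, -, -⟩
        funext i
        rw [Fin.fin_one_eq_zero i, h0]
      · rintro rfl
        exact ⟨rfl, by rw [hT], fun i => i.elim0⟩
    rw [this]
    simp [Nat.multinomial]
  | succ n ih =>
    intro T c hsum
    classical
    set m := ∑ i : Fin n, c i.castSucc with hm
    have hTcard : T.card = m + c (Fin.last n) := by
      rw [← hsum, Fin.sum_univ_castSucc]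
    have hland : ∀ A ∈ chainFinset (n+1) T c,
        A ((Fin.last n).castSucc) ∈ T.powersetCard m := by
      intro A hA
      obtain ⟨h0, hlast, hstep⟩ := mem_chainFinset.mp hA
      have hsubT : A ((Fin.last n).castSucc) ⊆ T := by
        have := (hstep (Fin.last n)).1
        rwa [Fin.succ_last, hlast] at this
      have hcard : (T \ A ((Fin.last n).castSucc)).card = c (Fin.last n) := by
        have := (hstep (Fin.last n)).2
        rwa [Fin.succ_last, hlast] at this
      have := Finset.card_sdiff_add_card_eq_card hsubT
      rw [Finset.mem_powersetCard]
      exact ⟨hsubT, by omega⟩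
    rw [Finset.card_eq_sum_card_fiberwise hland]
    have hfib : ∀ S ∈ T.powersetCard m,
        ((chainFinset (n+1) T c).filter fun A => A ((Fin.last n).castSucc) = S).card
          = Nat.multinomial Finset.univ (fun i : Fin n => c i.castSucc) := by
      intro S hS
      obtain ⟨hST, hScard⟩ := Finset.mem_powersetCard.mp hS
      rw [← ih S (fun i => c i.castSucc) (by rw [hScard])]
      apply Finset.card_bij (fun A _ => fun j : Fin (n+1) => A j.castSucc)
      · intro A hA
        obtain ⟨hA', hpen⟩ := Finset.mem_filter.mp hA
        obtain ⟨h0, hlast, hstep⟩ := mem_chainFinset.mp hA'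
        rw [mem_chainFinset]
        refine ⟨?_, hpen, fun i => ?_⟩
        · simpa using h0
        · have := hstep i.castSucc
          rwa [Fin.succ_castSucc] at this
      · intro A₁ hA₁ A₂ hA₂ hEq
        obtain ⟨hA₁', hpen₁⟩ := Finset.mem_filter.mp hA₁
        obtain ⟨h0₁, hlast₁, _⟩ := mem_chainFinset.mp hA₁'
        obtain ⟨hA₂', hpen₂⟩ := Finset.mem_filter.mp hA₂
        obtain ⟨h0₂, hlast₂, _⟩ := mem_chainFinset.mp hA₂'
        funext i
        rcases Fin.eq_castSucc_or_eq_last i with ⟨j, rfl⟩ | rfl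
        · exact congrFun hEq j
        · rw [hlast₁, hlast₂]
      · intro A' hA'
        obtain ⟨h0', hlast', hstep'⟩ := mem_chainFinset.mp hA'
        refine ⟨Fin.snoc A' T, ?_, ?_⟩
        · rw [Finset.mem_filter]
          constructor
          · rw [mem_chainFinset]
            refine ⟨?_, ?_, fun i => ?_⟩
            · rw [show (0 : Fin (n+1+1)) = Fin.castSucc 0 from (Fin.castSucc_zero).symm,
                Fin.snoc_castSucc]
              exact h0'
            · exact Fin.snoc_last _ _
            · rcases Fin.eq_castSucc_or_eq_last i with ⟨j, rfl⟩ | rfl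
              · rw [Fin.succ_castSucc, Fin.snoc_castSucc, Fin.snoc_castSucc]
                exact hstep' j
              · rw [Fin.succ_last, Fin.snoc_castSucc, Fin.snoc_last, hlast']
                have := Finset.card_sdiff_add_card_eq_card hST
                exact ⟨hST, by omega⟩
          · rw [Fin.snoc_castSucc, hlast']
        · funext j
          exact Fin.snoc_castSucc _ _ j
    rw [Finset.sum_congr rfl hfib, Finset.sum_const, Finset.card_powersetCard, hTcard,
      smul_eq_mul, multinomial_fin_succ]
    congr 1
    rw [Nat.add_comm (c (Fin.last n)) m]
    rw [← Nat.choose_symm (Nat.le_add_left (c (Fin.last n)) m)]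
    congr 1
    omega

lemma edge_iff {N : ℕ} {ref : Finset Λ} (href : ref.card = N) {β γ : Finset Λ} :
    EFull ref N β γ ↔
      β.card = N ∧ γ.card = N ∧ γ ∩ ref ⊆ β ∩ ref ∧ β \ ref ⊂ γ \ ref := by
  constructor
  · rintro ⟨α, ⟨hαc, hβc, hocc, hdisj⟩, hne, rfl⟩
    simp only [occ, virt] at hocc hdisj
    -- the union of occupied parts is all of ref
    have hou : (α ∩ ref) ∪ (β ∩ ref) = ref := by
      apply Finset.eq_of_subset_of_card_le
      · intro x hx
        simp only [mem_union, mem_inter] at hx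
        tauto
      · rw [hocc, href]
    -- virt α is nonempty
    have hvne : (α \ ref).Nonempty := by
      rcases Finset.eq_empty_or_nonempty (α \ ref) with he | h
      · exfalso
        apply hne
        apply Finset.eq_of_subset_of_card_le
        · exact Finset.sdiff_eq_empty_iff_subset.mp he
        · rw [hαc, href]
      · exact h
    have hjoin_inter : exJoin ref α β ∩ ref = (α ∩ ref) ∩ (β ∩ ref) := by
      ext x
      simp only [exJoin, occ, virt, mem_union, mem_inter, mem_sdiff]
      tauto
    have hjoin_sdiff : exJoin ref α β \ ref = (α \ ref) ∪ (β \ ref) := by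
      ext x
      simp only [exJoin, occ, virt, mem_union, mem_inter, mem_sdiff]
      tauto
    have hdisj' : Disjoint (α \ ref) (β \ ref) := Finset.disjoint_iff_inter_eq_empty.mpr hdisj
    refine ⟨hβc, ?_, ?_, ?_⟩
    · -- card of the join is N
      have h1 := Finset.card_inter_add_card_sdiff α ref
      have h2 := Finset.card_inter_add_card_sdiff β ref
      have h3 := Finset.card_inter_add_card_sdiff (exJoin ref α β) ref
      have h4 := Finset.card_union_add_card_inter (α ∩ ref) (β ∩ ref)
      have h5 : (exJoin ref α β \ ref).card = (α \ ref).card + (β \ ref).card := by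
        rw [hjoin_sdiff, Finset.card_union_of_disjoint hdisj']
      rw [hjoin_inter] at h3
      rw [hou, href] at h4
      omega
    · rw [hjoin_inter]
      exact Finset.inter_subset_right
    · rw [hjoin_sdiff]
      rw [Finset.ssubset_iff_of_subset Finset.subset_union_right]
      obtain ⟨x, hx⟩ := hvne
      refine ⟨x, Finset.mem_union_left _ hx, fun hxβ => ?_⟩
      have : x ∈ (α \ ref) ∩ (β \ ref) := Finset.mem_inter.mpr ⟨hx, hxβ⟩
      rw [hdisj] at this
      exact absurd this (Finset.notMem_empty x)
  · rintro ⟨hβc, hγc, hsub, hssub⟩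
    classical
    obtain ⟨Aα, hAαdef⟩ : ∃ A, A = (β ∩ ref) \ γ := ⟨_, rfl⟩
    obtain ⟨Bα, hBαdef⟩ : ∃ B, B = (γ \ ref) \ β := ⟨_, rfl⟩
    have hAsub : Aα ⊆ ref := by
      rw [hAαdef]
      intro x hx
      exact (Finset.mem_inter.mp (Finset.mem_sdiff.mp hx).1).2
    have hBnref : ∀ x ∈ Bα, x ∉ ref := by
      rw [hBαdef]
      intro x hx
      exact (Finset.mem_sdiff.mp (Finset.mem_sdiff.mp hx).1).2
    -- basic cardinalities
    have hc1 := Finset.card_inter_add_card_sdiff β ref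
    have hc2 := Finset.card_inter_add_card_sdiff γ ref
    have hA_eq : Aα = (β ∩ ref) \ (γ ∩ ref) := by
      ext x
      simp only [hAαdef, mem_sdiff, mem_inter]
      tauto
    have hB_eq : Bα = (γ \ ref) \ (β \ ref) := by
      ext x
      simp only [hBαdef, mem_sdiff]
      tauto
    have hAcard : Aα.card + (γ ∩ ref).card = (β ∩ ref).card := by
      rw [hA_eq]; exact Finset.card_sdiff_add_card_eq_card hsub
    have hBcard : Bα.card + (β \ ref).card = (γ \ ref).card := by
      rw [hB_eq]; exact Finset.card_sdiff_add_card_eq_card hssub.subset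
    have hABcard : Aα.card = Bα.card := by omega
    have hdisjAB : Disjoint Bα (ref \ Aα) := by
      rw [Finset.disjoint_left]
      intro x hx hx'
      exact hBnref x hx (Finset.mem_sdiff.mp hx').1
    refine ⟨(ref \ Aα) ∪ Bα, ⟨?_, hβc, ?_, ?_⟩, ?_, ?_⟩
    · -- card = N
      rw [Finset.union_comm, Finset.card_union_of_disjoint hdisjAB,
        Finset.card_sdiff_of_subset hAsub, href]
      omega
    · -- occupied union has card N
      have hocc_eq : occ ref ((ref \ Aα) ∪ Bα) ∪ occ ref β = ref := by
        ext x
        simp only [occ, hAαdef, hBαdef, mem_union, mem_inter, mem_sdiff]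
        tauto
      rw [hocc_eq, href]
    · -- virtual parts disjoint
      ext x
      simp only [virt, hAαdef, hBαdef, mem_inter, mem_sdiff, mem_union,
        Finset.notMem_empty, iff_false]
      tauto
    · -- α ≠ ref
      obtain ⟨x, hxγ, hxβ⟩ := Finset.exists_of_ssubset hssub
      have hxB : x ∈ Bα := by
        rw [hBαdef, Finset.mem_sdiff]
        refine ⟨hxγ, fun hxb => hxβ ?_⟩
        exact Finset.mem_sdiff.mpr ⟨hxb, (Finset.mem_sdiff.mp hxγ).2⟩
      intro hcontra
      have : x ∈ ref := hcontra ▸ Finset.mem_union_right _ hxB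
      exact (Finset.mem_sdiff.mp hxγ).2 this
    · -- γ = exJoin
      have h1 : ∀ x, x ∈ γ → x ∈ ref → x ∈ β :=
        fun x hg hrf => (Finset.mem_inter.mp (hsub (Finset.mem_inter.mpr ⟨hg, hrf⟩))).1
      have h2 : ∀ x, x ∈ β → x ∉ ref → x ∈ γ := fun x hb hrf =>
        (Finset.mem_sdiff.mp (hssub.subset (Finset.mem_sdiff.mpr ⟨hb, hrf⟩))).1
      ext x
      simp only [exJoin, occ, virt, hAαdef, hBαdef, mem_union, mem_inter, mem_sdiff]
      have h1x := h1 x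
      have h2x := h2 x
      clear h1 h2 hsub hssub hAsub hBnref hc1 hc2 hA_eq hB_eq hAcard hBcard hABcard hdisjAB
      tauto
  

set_option maxHeartbeats 2000000 in
/-- Let `|Λ| = K`, `2N ≤ K`, and let `γ ∈ S` have rank `r ≥ 1`.  Then
for every `1 ≤ n ≤ r` the number of directed paths of length `n` from the reference `0`
to `γ` in the full excitation graph equals
`p(r,n) = Σ_{r₁+⋯+r_n = r, r_i ≥ 1} (r! / (r₁!⋯r_n!))²`;
in particular it depends only on `r` and `n`. -/
theorem pathCount_eq [Fintype Λ] (ref : Finset Λ) (N K r n : ℕ)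
    (hK : Fintype.card Λ = K) (hN : 1 ≤ N) (h2N : 2 * N ≤ K) (href : ref.card = N)
    (γ : Finset Λ) (hγ : γ.card = N) (hr : rk ref γ = r) (hr1 : 1 ≤ r)
    (hn1 : 1 ≤ n) (hnr : n ≤ r) :
    pathCount ref N n γ =
      ∑ c ∈ (Finset.Nat.antidiagonalTuple n r).filter fun c => ∀ i, 1 ≤ c i,
        (Nat.multinomial Finset.univ c) ^ 2 := by
  classical
  have hγr : (γ \ ref).card = r := by
    rw [← hr]; rfl
  have hrefγ : (ref \ γ).card = r := by
    have h1 := Finset.card_inter_add_card_sdiff γ ref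
    have h2 := Finset.card_inter_add_card_sdiff ref γ
    have h3 : (γ ∩ ref).card = (ref ∩ γ).card := by rw [Finset.inter_comm]
    omega
  unfold pathCount
  have hland : ∀ p ∈ (Finset.univ : Finset (Fin (n + 1) → Finset Λ)).filter (fun p =>
      p 0 = ref ∧ p (Fin.last n) = γ ∧
        ∀ i : Fin n, EFull ref N (p i.castSucc) (p i.succ)),
      (fun i : Fin n => ((p i.succ \ ref) \ (p i.castSucc \ ref)).card) ∈
        (Finset.Nat.antidiagonalTuple n r).filter fun c => ∀ i, 1 ≤ c i := by
    intro p hp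
    obtain ⟨-, hp0, hpl, hedge⟩ := Finset.mem_filter.mp hp
    have hE := fun i => (edge_iff href).mp (hedge i)
    rw [Finset.mem_filter]
    constructor
    · rw [Finset.Nat.mem_antidiagonalTuple]
      have ht := fin_telescope (fun i => (p i \ ref).card)
        (fun i : Fin n => ((p i.succ \ ref) \ (p i.castSucc \ ref)).card) (fun i => by
          have hsub := (hE i).2.2.2.subset
          have := Finset.card_sdiff_add_card_eq_card hsub
          omega)
      rw [hp0, hpl, Finset.sdiff_self, Finset.card_empty, hγr] at ht
      omega
    · intro i
      obtain ⟨x, hx1, hx2⟩ := Finset.exists_of_ssubset (hE i).2.2.2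
      exact Finset.card_pos.mpr ⟨x, Finset.mem_sdiff.mpr ⟨hx1, hx2⟩⟩
  rw [Finset.card_eq_sum_card_fiberwise hland]
  refine Finset.sum_congr rfl fun c hc => ?_
  obtain ⟨hcmem, hc1⟩ := Finset.mem_filter.mp hc
  have hcsum : ∑ i, c i = r := Finset.Nat.mem_antidiagonalTuple.mp hcmem
  rw [sq, show Nat.multinomial Finset.univ c * Nat.multinomial Finset.univ c =
      ((chainFinset n (ref \ γ) c) ×ˢ (chainFinset n (γ \ ref) c)).card from by
    rw [Finset.card_product, chainFinset_card n (ref \ γ) c (by rw [hrefγ]; exact hcsum),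
      chainFinset_card n (γ \ ref) c (by rw [hγr]; exact hcsum)]]
  apply Finset.card_bij (fun p _ => ((fun i : Fin (n+1) => ref \ p i),
    (fun i : Fin (n+1) => p i \ ref)))
  · -- maps into the product
    intro p hp
    obtain ⟨hppath, hpF⟩ := Finset.mem_filter.mp hp
    obtain ⟨-, hp0, hpl, hedge⟩ := Finset.mem_filter.mp hppath
    have hE := fun i => (edge_iff href).mp (hedge i)
    have hcards : ∀ i, (p i).card = N := by
      intro i
      rcases Fin.eq_castSucc_or_eq_last i with ⟨j, rfl⟩ | rfl
      · exact (hE j).1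
      · rw [hpl]; exact hγ
    have hhv : ∀ i, (ref \ p i).card = (p i \ ref).card := by
      intro i
      have h1 := Finset.card_inter_add_card_sdiff ref (p i)
      have h2 := Finset.card_inter_add_card_sdiff (p i) ref
      have h3 : (ref ∩ p i).card = (p i ∩ ref).card := by rw [Finset.inter_comm]
      have := hcards i
      omega
    have hAsubstep : ∀ i : Fin n, ref \ p i.castSucc ⊆ ref \ p i.succ := by
      intro i x hx
      rw [Finset.mem_sdiff] at hx ⊢
      refine ⟨hx.1, fun hcon => hx.2 ?_⟩
      exact (Finset.mem_inter.mp ((hE i).2.2.1 (Finset.mem_inter.mpr ⟨hcon, hx.1⟩))).1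
    have hBsubstep : ∀ i : Fin n, p i.castSucc \ ref ⊆ p i.succ \ ref :=
      fun i => (hE i).2.2.2.subset
    have hBdiff : ∀ i : Fin n, ((p i.succ \ ref) \ (p i.castSucc \ ref)).card = c i :=
      fun i => congrFun hpF i
    have hAdiff : ∀ i : Fin n, ((ref \ p i.succ) \ (ref \ p i.castSucc)).card = c i := by
      intro i
      have hA := Finset.card_sdiff_add_card_eq_card (hAsubstep i)
      have hB := Finset.card_sdiff_add_card_eq_card (hBsubstep i)
      have e1 := hBdiff i
      have e2 := hhv i.castSucc
      have e3 := hhv i.succ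
      omega
    rw [Finset.mem_product]
    dsimp only
    constructor
    · rw [mem_chainFinset]
      exact ⟨by rw [hp0]; exact Finset.sdiff_self ref, by rw [hpl],
        fun i => ⟨hAsubstep i, hAdiff i⟩⟩
    · rw [mem_chainFinset]
      exact ⟨by rw [hp0]; exact Finset.sdiff_self ref, by rw [hpl],
        fun i => ⟨hBsubstep i, hBdiff i⟩⟩
  · -- injectivity
    intro p hp q hq hpq
    have h1 := congrArg Prod.fst hpq
    have h2 := congrArg Prod.snd hpq
    simp only at h1 h2
    funext i
    have e1 := Finset.ext_iff.mp (congrFun h1 i)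
    have e2 := Finset.ext_iff.mp (congrFun h2 i)
    ext x
    have f1 := e1 x
    have f2 := e2 x
    simp only [Finset.mem_sdiff] at f1 f2
    clear hp hq hpq h1 h2 e1 e2 hland hc hcmem hc1
    by_cases hx : x ∈ ref <;> tauto
  · -- surjectivity
    rintro ⟨A, B⟩ hAB
    rw [Finset.mem_product] at hAB
    dsimp only at hAB
    obtain ⟨hA, hB⟩ := hAB
    obtain ⟨hA0, hAl, hAstep⟩ := mem_chainFinset.mp hA
    obtain ⟨hB0, hBl, hBstep⟩ := mem_chainFinset.mp hB
    have hAsub : ∀ i, A i ⊆ ref := by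
      intro i
      refine (chain_subset_last A (fun j => (hAstep j).1) i).trans ?_
      rw [hAl]
      exact Finset.sdiff_subset
    have hBvirt : ∀ i, ∀ x ∈ B i, x ∉ ref := by
      intro i x hx
      have hmem := chain_subset_last B (fun j => (hBstep j).1) i hx
      rw [hBl] at hmem
      exact (Finset.mem_sdiff.mp hmem).2
    have hcardAB : ∀ i, (A i).card = (B i).card := by
      refine fin_card_eq _ _ c ?_ ?_ ?_
      · intro i
        have h1 := Finset.card_sdiff_add_card_eq_card (hAstep i).1
        have h2 := (hAstep i).2
        omega
      · intro i
        have h1 := Finset.card_sdiff_add_card_eq_card (hBstep i).1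
        have h2 := (hBstep i).2
        omega
      · rw [hA0, hB0]
    have hh : ∀ i, ref \ ((ref \ A i) ∪ B i) = A i := by
      intro i
      ext x
      have h1x : x ∈ A i → x ∈ ref := fun h => hAsub i h
      have h2x : x ∈ B i → x ∉ ref := hBvirt i x
      simp only [Finset.mem_sdiff, Finset.mem_union, not_or]
      by_cases hx : x ∈ A i <;> by_cases hx2 : x ∈ ref <;> tauto
    have hv : ∀ i, ((ref \ A i) ∪ B i) \ ref = B i := by
      intro i
      ext x
      have h2x : x ∈ B i → x ∉ ref := hBvirt i x
      simp only [Finset.mem_sdiff, Finset.mem_union]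
      tauto
    have hinter : ∀ i, ((ref \ A i) ∪ B i) ∩ ref = ref \ A i := by
      intro i
      ext x
      have h2x : x ∈ B i → x ∉ ref := hBvirt i x
      simp only [Finset.mem_inter, Finset.mem_union, Finset.mem_sdiff]
      tauto
    have hpcard : ∀ i, ((ref \ A i) ∪ B i).card = N := by
      intro i
      have hdisj : Disjoint (ref \ A i) (B i) := by
        rw [Finset.disjoint_right]
        exact fun x hx hx' => hBvirt i x hx (Finset.mem_sdiff.mp hx').1
      rw [Finset.card_union_of_disjoint hdisj, Finset.card_sdiff_of_subset (hAsub i), href]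
      have hle := Finset.card_le_card (hAsub i)
      rw [href] at hle
      have := hcardAB i
      omega
    refine ⟨fun i => (ref \ A i) ∪ B i, ?_, ?_⟩
    · refine Finset.mem_filter.mpr ⟨Finset.mem_filter.mpr ⟨Finset.mem_univ _, ?_, ?_, ?_⟩, ?_⟩
      · dsimp only
        rw [hA0, hB0]
        simp
      · dsimp only
        rw [hAl, hBl]
        ext x
        simp only [Finset.mem_union, Finset.mem_sdiff]
        by_cases hx : x ∈ ref <;> tauto
      · intro i
        rw [edge_iff href]
        dsimp only
        refine ⟨hpcard i.castSucc, hpcard i.succ, ?_, ?_⟩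
        · rw [hinter, hinter]
          exact Finset.sdiff_subset_sdiff (subset_refl _) (hAstep i).1
        · rw [hv, hv]
          have hsub := (hBstep i).1
          have hcardd := (hBstep i).2
          have hpos : 1 ≤ c i := hc1 i
          rw [Finset.ssubset_iff_of_subset hsub]
          have hne : ((B i.succ) \ (B i.castSucc)).Nonempty :=
            Finset.card_pos.mp (by omega)
          obtain ⟨x, hx⟩ := hne
          exact ⟨x, (Finset.mem_sdiff.mp hx).1, (Finset.mem_sdiff.mp hx).2⟩
      · funext i
        dsimp only
        rw [hv, hv]
        exact (hBstep i).2
    · dsimp only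
      refine Prod.ext ?_ ?_
      · funext i
        exact hh i
      · funext i
        exact hv i

end CC
end
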